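/- The function K_{a2} = p_x^2 + (k_1 x^2/2 + k_2/x^2) p_z^2 is a constant of motion for the geodesic Hamiltonian T_a, i.e. the Poisson bracket {T_a, K_{a2}} vanishes wherever x ≠ 0 and y ≠ 0. -/

import Mathlib

/-- Canonical Poisson bracket on phase space ℝ³ × ℝ³ with coordinates (x,y,z,pₓ,p_y,p_z). -/
noncomputable def pb (F G : ℝ → ℝ → ℝ → ℝ → ℝ → ℝ → ℝ) (x y z px py pz : ℝ) : ℝ :=
    deriv (fun t => F t y z px py pz) x * deriv (fun t => G x y z t py pz) px
  + deriv (fun t => F x t z px py pz) y * deriv (fun t => G x y z px t pz) py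
  + deriv (fun t => F x y t px py pz) z * deriv (fun t => G x y z px py t) pz
  - deriv (fun t => F x y z t py pz) px * deriv (fun t => G t y z px py pz) x
  - deriv (fun t => F x y z px t pz) py * deriv (fun t => G x t z px py pz) y
  - deriv (fun t => F x y z px py t) pz * deriv (fun t => G x y t px py pz) z

lemma hasDerivAt_poly (a c x : ℝ) : HasDerivAt (fun t : ℝ => a*t^2 + c) (2*a*x) x := by
  have h1 : HasDerivAt (fun t : ℝ => t^2) (2*x) x := by
    simpa using hasDerivAt_pow 2 x
  simpa [mul_comm, mul_assoc, mul_left_comm] using (h1.const_mul a).add_const c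

lemma hasDerivAt_quad (a b c : ℝ) {x : ℝ} (hx : x ≠ 0) :
    HasDerivAt (fun t : ℝ => a*t^2 + b/t^2 + c) (2*a*x - 2*b/x^3) x := by
  have h1 : HasDerivAt (fun t : ℝ => t^2) (2*x) x := by
    simpa using hasDerivAt_pow 2 x
  have hx2 : x^2 ≠ 0 := pow_ne_zero 2 hx
  have h2 : HasDerivAt (fun t : ℝ => b/t^2) ((0*x^2 - b*(2*x))/(x^2)^2) x :=
    (hasDerivAt_const x b).div h1 hx2
  have h3 : HasDerivAt (fun t : ℝ => a*t^2 + b/t^2 + c) (a*(2*x) + (0*x^2 - b*(2*x))/(x^2)^2) x :=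
    ((h1.const_mul a).add h2).add_const c
  convert h3 using 1
  field_simp
  ring

lemma deriv_poly (a c x : ℝ) : deriv (fun t : ℝ => a*t^2 + c) x = 2*a*x :=
  (hasDerivAt_poly a c x).deriv

lemma deriv_quad (a b c : ℝ) {x : ℝ} (hx : x ≠ 0) :
    deriv (fun t : ℝ => a*t^2 + b/t^2 + c) x = 2*a*x - 2*b/x^3 :=
  (hasDerivAt_quad a b c hx).deriv

theorem stmt_0 (k1 k2 k3 : ℝ) (x y z px py pz : ℝ) (hx : x ≠ 0) (hy : y ≠ 0) :
    pb (fun x y _ px py pz =>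
          (1/2) * (px^2 + py^2 + ((1/2)*k1*(x^2+y^2) + k2/x^2 + k3/y^2) * pz^2))
       (fun x _ _ px _ pz => px^2 + (k1*x^2/2 + k2/x^2) * pz^2)
       x y z px py pz = 0 := by
  unfold pb
  beta_reduce
  -- F derivatives
  have hFx : deriv (fun t => (1/2) * (px^2 + py^2 + ((1/2)*k1*(t^2+y^2) + k2/t^2 + k3/y^2) * pz^2)) x
      = 2*(k1*pz^2/4)*x - 2*(k2*pz^2/2)/x^3 := by
    rw [show (fun t => (1/2) * (px^2 + py^2 + ((1/2)*k1*(t^2+y^2) + k2/t^2 + k3/y^2) * pz^2))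
        = (fun t : ℝ => (k1*pz^2/4)*t^2 + (k2*pz^2/2)/t^2
            + ((1/2)*(px^2+py^2) + ((1/2)*k1*y^2 + k3/y^2)*pz^2/2)) from funext fun t => by ring]
    exact deriv_quad _ _ _ hx
  have hFy : deriv (fun t => (1/2) * (px^2 + py^2 + ((1/2)*k1*(x^2+t^2) + k2/x^2 + k3/t^2) * pz^2)) y
      = 2*(k1*pz^2/4)*y - 2*(k3*pz^2/2)/y^3 := by
    rw [show (fun t => (1/2) * (px^2 + py^2 + ((1/2)*k1*(x^2+t^2) + k2/x^2 + k3/t^2) * pz^2))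
        = (fun t : ℝ => (k1*pz^2/4)*t^2 + (k3*pz^2/2)/t^2
            + ((1/2)*(px^2+py^2) + ((1/2)*k1*x^2 + k2/x^2)*pz^2/2)) from funext fun t => by ring]
    exact deriv_quad _ _ _ hy
  have hFz : deriv (fun _ : ℝ => (1/2) * (px^2 + py^2 + ((1/2)*k1*(x^2+y^2) + k2/x^2 + k3/y^2) * pz^2)) z
      = 0 := deriv_const _ _
  have hFpx : deriv (fun t => (1/2) * (t^2 + py^2 + ((1/2)*k1*(x^2+y^2) + k2/x^2 + k3/y^2) * pz^2)) px
      = 2*(1/2)*px := by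
    rw [show (fun t => (1/2) * (t^2 + py^2 + ((1/2)*k1*(x^2+y^2) + k2/x^2 + k3/y^2) * pz^2))
        = (fun t : ℝ => (1/2)*t^2 + ((1/2)*(py^2 + ((1/2)*k1*(x^2+y^2) + k2/x^2 + k3/y^2) * pz^2)))
        from funext fun t => by ring]
    exact deriv_poly _ _ _
  have hFpy : deriv (fun t => (1/2) * (px^2 + t^2 + ((1/2)*k1*(x^2+y^2) + k2/x^2 + k3/y^2) * pz^2)) py
      = 2*(1/2)*py := by
    rw [show (fun t => (1/2) * (px^2 + t^2 + ((1/2)*k1*(x^2+y^2) + k2/x^2 + k3/y^2) * pz^2))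
        = (fun t : ℝ => (1/2)*t^2 + ((1/2)*(px^2 + ((1/2)*k1*(x^2+y^2) + k2/x^2 + k3/y^2) * pz^2)))
        from funext fun t => by ring]
    exact deriv_poly _ _ _
  have hFpz : deriv (fun t => (1/2) * (px^2 + py^2 + ((1/2)*k1*(x^2+y^2) + k2/x^2 + k3/y^2) * t^2)) pz
      = 2*(((1/2)*k1*(x^2+y^2) + k2/x^2 + k3/y^2)/2)*pz := by
    rw [show (fun t => (1/2) * (px^2 + py^2 + ((1/2)*k1*(x^2+y^2) + k2/x^2 + k3/y^2) * t^2))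
        = (fun t : ℝ => (((1/2)*k1*(x^2+y^2) + k2/x^2 + k3/y^2)/2)*t^2 + (1/2)*(px^2+py^2))
        from funext fun t => by ring]
    exact deriv_poly _ _ _
  -- G derivatives
  have hGx : deriv (fun t => px^2 + (k1*t^2/2 + k2/t^2) * pz^2) x
      = 2*(k1*pz^2/2)*x - 2*(k2*pz^2)/x^3 := by
    rw [show (fun t => px^2 + (k1*t^2/2 + k2/t^2) * pz^2)
        = (fun t : ℝ => (k1*pz^2/2)*t^2 + (k2*pz^2)/t^2 + px^2) from funext fun t => by ring]
    exact deriv_quad _ _ _ hx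
  have hGy : deriv (fun _ : ℝ => px^2 + (k1*x^2/2 + k2/x^2) * pz^2) y = 0 := deriv_const _ _
  have hGz : deriv (fun _ : ℝ => px^2 + (k1*x^2/2 + k2/x^2) * pz^2) z = 0 := deriv_const _ _
  have hGpx : deriv (fun t => t^2 + (k1*x^2/2 + k2/x^2) * pz^2) px = 2*1*px := by
    rw [show (fun t => t^2 + (k1*x^2/2 + k2/x^2) * pz^2)
        = (fun t : ℝ => 1*t^2 + (k1*x^2/2 + k2/x^2) * pz^2) from funext fun t => by ring]
    exact deriv_poly _ _ _
  have hGpy : deriv (fun _ : ℝ => px^2 + (k1*x^2/2 + k2/x^2) * pz^2) py = 0 := deriv_const _ _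
  have hGpz : deriv (fun t => px^2 + (k1*x^2/2 + k2/x^2) * t^2) pz
      = 2*(k1*x^2/2 + k2/x^2)*pz := by
    rw [show (fun t => px^2 + (k1*x^2/2 + k2/x^2) * t^2)
        = (fun t : ℝ => (k1*x^2/2 + k2/x^2)*t^2 + px^2) from funext fun t => by ring]
    exact deriv_poly _ _ _
  rw [hFx, hFy, hFz, hFpx, hFpy, hFpz, hGx, hGy, hGz, hGpx, hGpy, hGpz]
  field_simp
  ring
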